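/- There exists a one-way deterministic pointer pushdown automaton over the alphabet {a, b, c} that recognizes exactly the language {aⁿbⁿcⁿ | n ≥ 1}. -/

import Mathlib

/-! ### Deterministic pointer pushdown automata -/

/-- Tape symbols: the input letters plus the end markers `▷` and `◁`. -/
inductive TSym (A : Type) : Type where
  | lmark : TSym A
  | rmark : TSym A
  | sym : A → TSym A

/-- The symbol in cell `j` of the tape `▷w◁` (cell `0` holds `▷`, cell `|w|+1` holds `◁`). -/
def tapeNth {A : Type} (w : List A) (j : ℕ) : TSym A :=
  if j = 0 then .lmark
  else
    match w[j - 1]? with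
    | some a => .sym a
    | none => .rmark

/-- Head directions: move left, stay, return to the stored pointer, move right. -/
inductive Dir : Type where
  | left | down | up | right
deriving DecidableEq

/-- A (two-way) deterministic pointer pushdown automaton.  A transition
`trans q a Z = some (p, β, d)` pops `(Z, i)` when `β = []` (moving the head by `d`,
where `d = up` returns the head to the position `i` stored with `Z`), and pushes `β`
above `Z` when `β ≠ []` (moving the head by `d`).  Moves `↑` must pop (`α = ε`),
moving left off `▷` and right off `◁` is forbidden. -/
structure DPPDA (Q A Γ : Type) : Type where
  trans : Q → TSym A → Γ → Option (Q × List Γ × Dir)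
  init : Q
  Z0 : Γ
  final : Q → Bool
  up_pop : ∀ q a Z p β, trans q a Z = some (p, β, Dir.up) → β = []
  no_left_lmark : ∀ q Z p β, trans q TSym.lmark Z ≠ some (p, β, Dir.left)
  no_right_rmark : ∀ q Z p β, trans q TSym.rmark Z ≠ some (p, β, Dir.right)

/-- A configuration: state, stack of symbols tagged with the head position at which
they were pushed (top of the stack is the head of the list), and head position. -/
structure Conf (Q Γ : Type) : Type where
  state : Q
  stack : List (Γ × ℕ)
  pos : ℕ

/-- One move of a DPPDA on input `w` (`none` when no move is possible). -/
def DPPDA.step {Q A Γ : Type} (M : DPPDA Q A Γ) (w : List A) (c : Conf Q Γ) :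
    Option (Conf Q Γ) :=
  match c.stack with
  | [] => none
  | (Z, i) :: rest =>
    match M.trans c.state (tapeNth w c.pos) Z with
    | none => none
    | some (p, β, d) =>
      let j' : ℕ :=
        match d with
        | Dir.left => c.pos - 1
        | Dir.down => c.pos
        | Dir.up => i
        | Dir.right => c.pos + 1
      match β with
      | [] => some ⟨p, rest, j'⟩
      | X :: Xs => some ⟨p, ((X :: Xs).map fun Y => (Y, j')) ++ (Z, i) :: rest, j'⟩

/-- Reachability between configurations. -/
def DPPDA.Reaches {Q A Γ : Type} (M : DPPDA Q A Γ) (w : List A) :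
    Conf Q Γ → Conf Q Γ → Prop :=
  Relation.ReflTransGen (fun c c' => M.step w c = some c')

/-- Acceptance: from the initial configuration `(q₀, (Z₀, 0), 0)` the automaton
reaches the right end marker with empty stack in a final state. -/
def DPPDA.Accepts {Q A Γ : Type} (M : DPPDA Q A Γ) (w : List A) : Prop :=
  ∃ qf : Q, M.final qf = true ∧
    M.Reaches w ⟨M.init, [(M.Z0, 0)], 0⟩ ⟨qf, [], w.length + 1⟩

/-- A one-way DPPDA: moves with direction `←` are forbidden. -/
def DPPDA.OneWay {Q A Γ : Type} (M : DPPDA Q A Γ) : Prop :=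
  ∀ q a Z p β, M.trans q a Z ≠ some (p, β, Dir.left)

namespace ABC

inductive St : Type where
  | s0 | s1 | s2 | s3 | s4 | s5 | s6
deriving DecidableEq

instance : Fintype St :=
  Fintype.ofList [St.s0, St.s1, St.s2, St.s3, St.s4, St.s5, St.s6] (by intro x; cases x <;> simp)

inductive Sk : Type where
  | z0 | pp | aa | dd
deriving DecidableEq

instance : Fintype Sk :=
  Fintype.ofList [Sk.z0, Sk.pp, Sk.aa, Sk.dd] (by intro x; cases x <;> simp)

open St Sk

def tr : St → TSym (Fin 3) → Sk → Option (St × List Sk × Dir)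
  | .s0, .lmark, .z0 => some (.s1, [.pp], .right)
  | .s1, .sym ⟨0,_⟩, _ => some (.s1, [.aa], .right)
  | .s1, .sym ⟨1,_⟩, .aa => some (.s2, [], .right)
  | .s2, .sym ⟨1,_⟩, .aa => some (.s2, [], .right)
  | .s2, .sym ⟨2,_⟩, .pp => some (.s3, [], .up)
  | .s3, .sym ⟨0,_⟩, _ => some (.s3, [.aa], .right)
  | .s3, .sym ⟨1,_⟩, _ => some (.s4, [.dd], .right)
  | .s4, _, .dd => some (.s3, [], .down)
  | .s3, .sym ⟨2,_⟩, .aa => some (.s5, [], .right)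
  | .s5, .sym ⟨2,_⟩, .aa => some (.s5, [], .right)
  | .s5, .rmark, .z0 => some (.s6, [], .down)
  | _, _, _ => none

def M : DPPDA St (Fin 3) Sk where
  trans := tr
  init := .s0
  Z0 := .z0
  final := fun q => match q with | .s6 => true | _ => false
  up_pop := by
    intro q a Z p β h
    cases a with
    | sym x => fin_cases x <;> cases q <;> cases Z <;> cases h <;> rfl
    | lmark => cases q <;> cases Z <;> simp_all [tr]
    | rmark => cases q <;> cases Z <;> simp_all [tr]
  no_left_lmark := by intro q Z p β; cases q <;> cases Z <;> simp [tr]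
  no_right_rmark := by intro q Z p β; cases q <;> cases Z <;> simp [tr]

theorem oneWay : M.OneWay := by
  intro q a Z p β
  show tr q a Z ≠ _
  cases a with
  | sym x => fin_cases x <;> cases q <;> cases Z <;> intro h <;> cases h
  | lmark => cases q <;> cases Z <;> simp [tr]
  | rmark => cases q <;> cases Z <;> simp [tr]

end ABC
namespace ABC
open St Sk

abbrev Cfg := Conf St Sk

def acc (w : List (Fin 3)) : Cfg := ⟨.s6, [], w.length + 1⟩

lemma reaches_iff_of_step {w : List (Fin 3)} {c c' : Cfg} (hc : c.stack ≠ [])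
    (h : M.step w c = some c') :
    M.Reaches w c (acc w) ↔ M.Reaches w c' (acc w) := by
  constructor
  · intro hr
    rcases (Relation.ReflTransGen.cases_head hr) with rfl | ⟨d, hd, hr'⟩
    · exact absurd rfl hc
    · have : d = c' := by
        have := hd.symm.trans h
        exact Option.some.inj this
      exact this ▸ hr'
  · intro hr
    exact Relation.ReflTransGen.head h hr

lemma not_reaches_of_stuck {w : List (Fin 3)} {c : Cfg} (hc : c.stack ≠ [])
    (h : M.step w c = none) : ¬ M.Reaches w c (acc w) := by
  intro hr
  rcases (Relation.ReflTransGen.cases_head hr) with rfl | ⟨d, hd, _⟩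
  · exact absurd rfl hc
  · rw [h] at hd; cases hd

lemma tape_zero (w : List (Fin 3)) : tapeNth w 0 = .lmark := by simp [tapeNth]

lemma tape_get {w : List (Fin 3)} {j : ℕ} {s : Fin 3} (h : w[j]? = some s) :
    tapeNth w (j + 1) = .sym s := by simp [tapeNth, h]

lemma tape_end {w : List (Fin 3)} {j : ℕ} (h : w[j]? = none) :
    tapeNth w (j + 1) = .rmark := by simp [tapeNth, h]

/-- stack segment of `k` copies of `aa` pushed at positions `j+1 .. j+k` (top tagged `j+k`). -/
def stA : ℕ → ℕ → List (Sk × ℕ)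
  | _, 0 => []
  | j, k + 1 => (Sk.aa, j + k + 1) :: stA j k

lemma stA_add (j a b : ℕ) : stA j (b + a) = stA (j + b) a ++ stA j b := by
  induction a with
  | zero => simp [stA]
  | succ a ih =>
      show stA j (b + a + 1) = _
      rw [stA, stA, ih]
      simp [List.cons_append]
      omega

end ABC
namespace ABC
open St Sk

lemma trA {st : St} (hst : st = .s1 ∨ st = .s3) (Z : Sk) :
    tr st (TSym.sym (0 : Fin 3)) Z = some (st, [Sk.aa], Dir.right) := by
  rcases hst with rfl | rfl <;> cases Z <;> rfl

lemma tr4 (a : TSym (Fin 3)) : tr .s4 a Sk.dd = some (.s3, [], Dir.down) := by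
  cases a with
  | sym x => fin_cases x <;> rfl
  | lmark => rfl
  | rmark => rfl

lemma trSkip (Z : Sk) : tr .s3 (TSym.sym (1 : Fin 3)) Z = some (.s4, [Sk.dd], Dir.right) := by
  cases Z <;> rfl

/-- Push loop for states `s1`/`s3`: reading `k` a's pushes `k` `aa`'s. -/
lemma loopA {w : List (Fin 3)} {st : St} (hst : st = .s1 ∨ st = .s3)
    (k j : ℕ) (S : List (Sk × ℕ)) (hS : S ≠ [])
    (h : ∀ i < k, tapeNth w (j + i) = .sym 0) :
    (M.Reaches w ⟨st, S, j⟩ (acc w) ↔ M.Reaches w ⟨st, stA j k ++ S, j + k⟩ (acc w)) := by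
  induction k with
  | zero => simp [stA]
  | succ k ih =>
      rw [ih (fun i hi => h i (by omega))]
      obtain ⟨⟨Z, i⟩, rest, hZ⟩ : ∃ Z rest, stA j k ++ S = Z :: rest := by
        cases hZ' : stA j k ++ S with
        | nil => exact absurd hZ' (by simp [hS])
        | cons a l => exact ⟨a, l, rfl⟩
      rw [hZ]
      have hs : tapeNth w (j + k) = .sym 0 := h k (by omega)
      have hstep : M.step w ⟨st, (Z, i) :: rest, j + k⟩ =
          some ⟨st, (Sk.aa, j + k + 1) :: (Z, i) :: rest, j + k + 1⟩ := by
        simp [DPPDA.step, M, hs, trA hst Z]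
      rw [reaches_iff_of_step (by simp) hstep]
      have : (⟨st, (Sk.aa, j + k + 1) :: (Z, i) :: rest, j + k + 1⟩ : Cfg)
          = ⟨st, stA j (k + 1) ++ S, j + (k + 1)⟩ := by
        rw [stA, List.cons_append, ← hZ]
        rfl
      rw [this]

/-- Pop loop: reading `k` copies of `s` pops `k` `aa`'s. -/
lemma loopPop {w : List (Fin 3)} {st : St} {s : Fin 3}
    (htr : tr st (.sym s) Sk.aa = some (st, [], Dir.right))
    (k : ℕ) : ∀ (j m : ℕ) (S : List (Sk × ℕ)),
    (∀ i < k, tapeNth w (j + i) = .sym s) →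
    (M.Reaches w ⟨st, stA m k ++ S, j⟩ (acc w) ↔ M.Reaches w ⟨st, S, j + k⟩ (acc w)) := by
  induction k with
  | zero => intro j m S _; simp [stA]
  | succ k ih =>
      intro j m S h
      have hs : tapeNth w j = .sym s := by
        have := h 0 (by omega); simpa using this
      have hstep : M.step w ⟨st, stA m (k + 1) ++ S, j⟩ =
          some ⟨st, stA m k ++ S, j + 1⟩ := by
        rw [stA, List.cons_append]
        simp [DPPDA.step, M, hs, htr]
      rw [reaches_iff_of_step (by rw [stA]; simp) hstep,
        ih (j + 1) m S (fun i hi => by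
          have := h (i + 1) (by omega)
          simpa [show j + 1 + i = j + (i + 1) by omega] using this)]
      have : j + 1 + k = j + (k + 1) := by omega
      rw [this]

/-- Skip loop: state `s3` moves over `k` b's leaving the stack unchanged. -/
lemma loopSkip {w : List (Fin 3)} (k : ℕ) : ∀ (j : ℕ) (S : List (Sk × ℕ)), S ≠ [] →
    (∀ i < k, tapeNth w (j + i) = .sym 1) →
    (M.Reaches w ⟨.s3, S, j⟩ (acc w) ↔ M.Reaches w ⟨.s3, S, j + k⟩ (acc w)) := by
  induction k with
  | zero => intro j S _ _; simp
  | succ k ih =>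
      intro j S hS h
      obtain ⟨⟨Z, i⟩, rest, hZ⟩ : ∃ Z rest, S = Z :: rest := by
        cases hZ' : S with
        | nil => exact absurd hZ' hS
        | cons a l => exact ⟨a, l, rfl⟩
      have hs : tapeNth w j = .sym 1 := by have := h 0 (by omega); simpa using this
      have hstep : M.step w ⟨.s3, S, j⟩ =
          some ⟨.s4, (Sk.dd, j + 1) :: S, j + 1⟩ := by
        rw [hZ]
        simp [DPPDA.step, M, hs, trSkip Z]
      rw [reaches_iff_of_step (by rw [hZ]; simp) hstep]
      have hstep2 : M.step w ⟨.s4, (Sk.dd, j + 1) :: S, j + 1⟩ =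
          some ⟨.s3, S, j + 1⟩ := by
        simp [DPPDA.step, M, tr4]
      rw [reaches_iff_of_step (by simp) hstep2,
        ih (j + 1) S hS (fun i hi => by
          have := h (i + 1) (by omega)
          simpa [show j + 1 + i = j + (i + 1) by omega] using this)]
      have : j + 1 + k = j + (k + 1) := by omega
      rw [this]

end ABC
namespace ABC
open St Sk

lemma accepts_iff (w : List (Fin 3)) :
    M.Accepts w ↔ M.Reaches w ⟨.s0, [(.z0, 0)], 0⟩ (acc w) := by
  constructor
  · rintro ⟨qf, hf, hr⟩
    cases qf <;> simp [M] at hf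
    exact hr
  · intro hr
    exact ⟨.s6, rfl, hr⟩

lemma getElem?_rep_append {α : Type} (s : α) (p : ℕ) (u : List α) {i : ℕ} (h : i < p) :
    (List.replicate p s ++ u)[i]? = some s := by
  rw [List.getElem?_append]
  simp [List.getElem?_replicate, h, List.length_replicate]

lemma getElem?_append_shift {α : Type} (x u : List α) (i : ℕ) :
    (x ++ u)[x.length + i]? = u[i]? := by
  rw [List.getElem?_append_right (by omega)]
  simp

-- stuck-transition helpers
lemma tr_s1_sym2 (Z : Sk) : tr .s1 (.sym (2 : Fin 3)) Z = none := by cases Z <;> rfl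
lemma tr_s1_rmark (Z : Sk) : tr .s1 .rmark Z = none := by cases Z <;> rfl
lemma tr_s2_aa_none {a : TSym (Fin 3)} (h : a ≠ .sym 1) : tr .s2 a .aa = none := by
  cases a with
  | sym x =>
      fin_cases x
      · rfl
      · exact absurd rfl h
      · rfl
  | lmark => rfl
  | rmark => rfl
lemma tr_s2_pp_none {a : TSym (Fin 3)} (h : a ≠ .sym 2) : tr .s2 a .pp = none := by
  cases a with
  | sym x =>
      fin_cases x
      · rfl
      · rfl
      · exact absurd rfl h
  | lmark => rfl
  | rmark => rfl
lemma tr_s5_z0_none {a : TSym (Fin 3)} (h : a ≠ .rmark) : tr .s5 a .z0 = none := by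
  cases a with
  | sym x => fin_cases x <;> rfl
  | lmark => rfl
  | rmark => exact absurd rfl h
lemma tr_s5_aa_none {a : TSym (Fin 3)} (h : a ≠ .sym 2) : tr .s5 a .aa = none := by
  cases a with
  | sym x =>
      fin_cases x
      · rfl
      · rfl
      · exact absurd rfl h
  | lmark => rfl
  | rmark => rfl

end ABC
namespace ABC
open St Sk

lemma getElem?_rep_shift {α : Type} (s : α) (p : ℕ) (u : List α) (i : ℕ) :
    (List.replicate p s ++ u)[p + i]? = u[i]? := by
  rw [List.getElem?_append_right (by simp)]
  simp

lemma master (p q r : ℕ) (t : List (Fin 3))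
    (h1 : (List.replicate q (1 : Fin 3) ++ (List.replicate r (2 : Fin 3) ++ t)).head? ≠ some 0)
    (h2 : (List.replicate r (2 : Fin 3) ++ t).head? ≠ some 1)
    (h3 : t.head? ≠ some 2) :
    M.Accepts (List.replicate p (0 : Fin 3) ++
        (List.replicate q (1 : Fin 3) ++ (List.replicate r (2 : Fin 3) ++ t))) ↔
      (1 ≤ p ∧ p = q ∧ q = r ∧ t = []) := by
  set u2 : List (Fin 3) := List.replicate r (2 : Fin 3) ++ t with hu2
  set u1 : List (Fin 3) := List.replicate q (1 : Fin 3) ++ u2 with hu1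
  set w : List (Fin 3) := List.replicate p (0 : Fin 3) ++ u1 with hw
  -- index facts
  have hget0 : ∀ i < p, w[i]? = some (0 : Fin 3) := fun i hi => getElem?_rep_append _ _ _ hi
  have hget1 : ∀ i < q, w[p + i]? = some (1 : Fin 3) := by
    intro i hi
    rw [hw, getElem?_rep_shift]
    exact getElem?_rep_append _ _ _ hi
  have hget2 : ∀ i < r, w[p + q + i]? = some (2 : Fin 3) := by
    intro i hi
    rw [hw, hu1, show p + q + i = p + (q + i) by omega, getElem?_rep_shift,
      getElem?_rep_shift]
    exact getElem?_rep_append _ _ _ hi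
  have hgetT : ∀ i, w[p + q + r + i]? = t[i]? := by
    intro i
    rw [hw, hu1, hu2, show p + q + r + i = p + (q + (r + i)) by omega, getElem?_rep_shift,
      getElem?_rep_shift, getElem?_rep_shift]
  have hlen : w.length = p + q + r + t.length := by simp [hw, hu1, hu2]; omega
  -- F tape facts
  have F1 : ∀ i < p, tapeNth w (1 + i) = .sym 0 := by
    intro i hi
    have h' := tape_get (hget0 i hi)
    rwa [show i + 1 = 1 + i by omega] at h'
  have F2 : ∀ i < q, tapeNth w (p + i + 1) = .sym 1 := fun i hi => tape_get (hget1 i hi)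
  have F3 : ∀ i < r, tapeNth w (p + q + i + 1) = .sym 2 := fun i hi => tape_get (hget2 i hi)
  rw [accepts_iff]
  -- step 0
  have hstep0 : M.step w ⟨.s0, [(.z0, 0)], 0⟩ = some ⟨.s1, [(.pp, 1), (.z0, 0)], 1⟩ := by
    simp [DPPDA.step, M, tape_zero, tr]
  rw [reaches_iff_of_step (by simp) hstep0]
  -- phase A
  rw [loopA (Or.inl rfl) p 1 [(Sk.pp, 1), (Sk.z0, 0)] (by simp) F1]
  cases q with
  | zero =>
      have hs1 : tapeNth w (1 + p) = .sym 2 ∨ tapeNth w (1 + p) = .rmark := by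
        cases r with
        | succ r' =>
            left
            have h' := tape_get (hget2 0 (by omega))
            rwa [show p + 0 + 0 + 1 = 1 + p by omega] at h'
        | zero =>
            cases t with
            | nil =>
                right
                have h' := tape_end (show w[p + 0 + 0 + 0]? = none by rw [hgetT 0]; rfl)
                rwa [show p + 0 + 0 + 0 + 1 = 1 + p by omega] at h'
            | cons x t' =>
                exfalso
                rw [hu1, hu2] at h1
                simp at h1 h3
                rw [hu2] at h2
                simp at h2
                fin_cases x <;> simp_all
      cases p with
      | zero =>
          refine iff_of_false (not_reaches_of_stuck (by simp [stA]) ?_)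
            (by rintro ⟨a, b, _⟩; omega)
          rcases hs1 with h | h <;>
            simp [DPPDA.step, M, stA, h, tr_s1_sym2, tr_s1_rmark]
      | succ p'' =>
          refine iff_of_false (not_reaches_of_stuck (by simp [stA]) ?_)
            (by rintro ⟨a, b, _⟩; omega)
          rcases hs1 with h | h <;>
            simp [DPPDA.step, M, stA, h, tr_s1_sym2, tr_s1_rmark]
  | succ q' =>
      have hs1 : tapeNth w (1 + p) = .sym 1 := by
        have h' := F2 0 (by omega)
        rwa [show p + 0 + 1 = 1 + p by omega] at h'
      cases p with
      | zero =>
          refine iff_of_false (not_reaches_of_stuck (by simp [stA]) ?_)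
            (by rintro ⟨a, _⟩; omega)
          simp [DPPDA.step, M, stA, hs1,
            show tr .s1 (.sym (1 : Fin 3)) .pp = none from rfl]
      | succ p' =>
          -- pop the first b
          have hstep1 : M.step w ⟨.s1, stA 1 (p' + 1) ++ [(Sk.pp, 1), (Sk.z0, 0)], 1 + (p' + 1)⟩
              = some ⟨.s2, stA 1 p' ++ [(Sk.pp, 1), (Sk.z0, 0)], p' + 3⟩ := by
            rw [stA, List.cons_append]
            simp [DPPDA.step, M, hs1, show tr .s1 (.sym (1 : Fin 3)) .aa
              = some (.s2, [], Dir.right) from rfl]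
            omega
          rw [reaches_iff_of_step (by rw [stA]; simp) hstep1]
          rcases le_or_gt q' p' with hle | hlt
          · -- at least as many a's as b's : pop q' more
            have hsplit : stA 1 p' = stA (1 + (p' - q')) q' ++ stA 1 (p' - q') := by
              have h0 : p' = (p' - q') + q' := by omega
              have h' := stA_add 1 q' (p' - q')
              rw [← h0] at h'
              exact h'
            rw [hsplit, List.append_assoc,
              loopPop (show tr .s2 (.sym (1 : Fin 3)) .aa = some (.s2, [], Dir.right) from rfl)
                q' (p' + 3) _ _ (fun i hi => by
                  have h' := F2 (i + 1) (by omega)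
                  rwa [show p' + 1 + (i + 1) + 1 = p' + 3 + i by omega] at h')]
            rcases eq_or_lt_of_le hle with heq | hlt2
            · -- p' = q' : counts match so far
              rw [show p' - q' = 0 by omega]
              have hcfg : (⟨St.s2, stA 1 0 ++ [(Sk.pp, 1), (Sk.z0, 0)], p' + 3 + q'⟩ : Cfg)
                  = ⟨St.s2, [(Sk.pp, 1), (Sk.z0, 0)], p' + q' + 3⟩ := by
                rw [stA, List.nil_append, show p' + 3 + q' = p' + q' + 3 by omega]
              rw [hcfg]
              cases r with
              | zero =>
                  -- no c's at all : stuck on pp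
                  have hs2 : tapeNth w (p' + q' + 3) ≠ .sym 2 := by
                    cases t with
                    | nil =>
                        have h' := tape_end (show w[(p' + 1) + (q' + 1) + 0 + 0]? = none by
                          rw [hgetT 0]; rfl)
                        rw [show p' + 1 + (q' + 1) + 0 + 0 + 1 = p' + q' + 3 by omega] at h'
                        rw [h']; intro hcon; cases hcon
                    | cons x t' =>
                        have h' := tape_get (show w[(p' + 1) + (q' + 1) + 0 + 0]? = some x by
                          rw [hgetT 0]; simp)
                        rw [show p' + 1 + (q' + 1) + 0 + 0 + 1 = p' + q' + 3 by omega] at h'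
                        rw [h']
                        intro hcon
                        apply h3
                        simpa using (TSym.sym.inj hcon)
                  refine iff_of_false (not_reaches_of_stuck (by simp) ?_)
                    (by rintro ⟨_, _, hc, _⟩; omega)
                  simp [DPPDA.step, M, tr_s2_pp_none hs2]
              | succ r' =>
                  -- jump back with the pointer
                  have hs2 : tapeNth w (p' + q' + 3) = .sym 2 := by
                    have h' := F3 0 (by omega)
                    rwa [show p' + 1 + (q' + 1) + 0 + 1 = p' + q' + 3 by omega] at h'
                  have hstep2 : M.step w ⟨.s2, [(Sk.pp, 1), (Sk.z0, 0)], p' + q' + 3⟩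
                      = some ⟨.s3, [(Sk.z0, 0)], 1⟩ := by
                    simp [DPPDA.step, M, hs2, show tr .s2 (.sym (2 : Fin 3)) .pp
                      = some (.s3, [], Dir.up) from rfl]
                  rw [reaches_iff_of_step (by simp) hstep2]
                  -- pass 2 : recount the a's
                  rw [loopA (Or.inr rfl) (p' + 1) 1 [(Sk.z0, 0)] (by simp) F1]
                  -- skip the b's
                  rw [loopSkip (q' + 1) (1 + (p' + 1)) _ (by simp) (fun i hi => by
                    have h' := F2 i hi
                    rwa [show p' + 1 + i + 1 = 1 + (p' + 1) + i by omega] at h')]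
                  -- first c
                  have hs3 : tapeNth w (1 + (p' + 1) + (q' + 1)) = .sym 2 := by
                    have h' := F3 0 (by omega)
                    rwa [show p' + 1 + (q' + 1) + 0 + 1 = 1 + (p' + 1) + (q' + 1) by omega] at h'
                  have hstep3 : M.step w ⟨.s3, stA 1 (p' + 1) ++ [(Sk.z0, 0)],
                      1 + (p' + 1) + (q' + 1)⟩
                      = some ⟨.s5, stA 1 p' ++ [(Sk.z0, 0)], p' + q' + 4⟩ := by
                    rw [stA, List.cons_append]
                    simp [DPPDA.step, M, hs3, show tr .s3 (.sym (2 : Fin 3)) .aa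
                      = some (.s5, [], Dir.right) from rfl]
                    omega
                  rw [reaches_iff_of_step (by rw [stA]; simp) hstep3]
                  rcases le_or_gt p' r' with hle2 | hlt4
                  · -- pop p' more c's
                    rw [loopPop (show tr .s5 (.sym (2 : Fin 3)) .aa
                        = some (.s5, [], Dir.right) from rfl) p' (p' + q' + 4) 1 _
                      (fun i hi => by
                        have h' := F3 (i + 1) (by omega)
                        rwa [show p' + 1 + (q' + 1) + (i + 1) + 1 = p' + q' + 4 + i by omega]
                          at h')]
                    rcases eq_or_lt_of_le hle2 with heq2 | hlt3
                    · -- p' = r' : counts all match, look at cell after the c's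
                      cases t with
                      | nil =>
                          have hs4 : tapeNth w (p' + q' + 4 + p') = .rmark := by
                            have h' := tape_end (show w[(p' + 1) + (q' + 1) + (r' + 1) + 0]?
                                = none by rw [hgetT 0]; rfl)
                            rwa [show p' + 1 + (q' + 1) + (r' + 1) + 0 + 1 = p' + q' + 4 + p'
                              by omega] at h'
                          have hstep4 : M.step w ⟨.s5, [(Sk.z0, 0)], p' + q' + 4 + p'⟩
                              = some ⟨.s6, [], p' + q' + 4 + p'⟩ := by
                            simp [DPPDA.step, M, hs4, show tr .s5 .rmark .z0
                              = some (.s6, [], Dir.down) from rfl]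
                          rw [reaches_iff_of_step (by simp) hstep4]
                          have hacc : (⟨St.s6, [], p' + q' + 4 + p'⟩ : Cfg) = acc w := by
                            simp only [acc, hlen]
                            congr 1
                            simp
                            omega
                          rw [hacc]
                          exact iff_of_true Relation.ReflTransGen.refl
                            ⟨by omega, by omega, by omega, rfl⟩
                      | cons x t' =>
                          have hs4 : tapeNth w (p' + q' + 4 + p') = .sym x := by
                            have h' := tape_get (show w[(p' + 1) + (q' + 1) + (r' + 1) + 0]?
                                = some x by rw [hgetT 0]; simp)
                            rwa [show p' + 1 + (q' + 1) + (r' + 1) + 0 + 1 = p' + q' + 4 + p'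
                              by omega] at h'
                          refine iff_of_false (not_reaches_of_stuck (by simp) ?_)
                            (by rintro ⟨_, _, _, ht⟩; cases ht)
                          simp [DPPDA.step, M, hs4,
                            tr_s5_z0_none (show TSym.sym x ≠ TSym.rmark by simp)]
                    · -- p' < r' : too many c's
                      have hs4 : tapeNth w (p' + q' + 4 + p') = .sym 2 := by
                        have h' := F3 (p' + 1) (by omega)
                        rwa [show p' + 1 + (q' + 1) + (p' + 1) + 1 = p' + q' + 4 + p'
                          by omega] at h'
                      refine iff_of_false (not_reaches_of_stuck (by simp) ?_)
                        (by rintro ⟨_, hb, hc, _⟩; omega)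
                      simp [DPPDA.step, M, hs4,
                        show tr .s5 (.sym (2 : Fin 3)) .z0 = none from rfl]
                  · -- r' < p' : too few c's, stuck on aa
                    have hsplit2 : stA 1 p' = stA (1 + (p' - r')) r' ++ stA 1 (p' - r') := by
                      have h0 : p' = (p' - r') + r' := by omega
                      have h' := stA_add 1 r' (p' - r')
                      rw [← h0] at h'
                      exact h'
                    rw [hsplit2, List.append_assoc,
                      loopPop (show tr .s5 (.sym (2 : Fin 3)) .aa
                          = some (.s5, [], Dir.right) from rfl) r' (p' + q' + 4) _ _
                        (fun i hi => by
                          have h' := F3 (i + 1) (by omega)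
                          rwa [show p' + 1 + (q' + 1) + (i + 1) + 1 = p' + q' + 4 + i by omega]
                            at h')]
                    obtain ⟨d, hd⟩ : ∃ d, p' - r' = d + 1 := ⟨p' - r' - 1, by omega⟩
                    have hs4 : tapeNth w (p' + q' + 4 + r') ≠ .sym 2 := by
                      cases t with
                      | nil =>
                          have h' := tape_end (show w[(p' + 1) + (q' + 1) + (r' + 1) + 0]?
                              = none by rw [hgetT 0]; rfl)
                          rw [show p' + 1 + (q' + 1) + (r' + 1) + 0 + 1 = p' + q' + 4 + r'
                            by omega] at h'
                          rw [h']; intro hcon; cases hcon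
                      | cons x t' =>
                          have h' := tape_get (show w[(p' + 1) + (q' + 1) + (r' + 1) + 0]?
                              = some x by rw [hgetT 0]; simp)
                          rw [show p' + 1 + (q' + 1) + (r' + 1) + 0 + 1 = p' + q' + 4 + r'
                            by omega] at h'
                          rw [h']
                          intro hcon
                          apply h3
                          simpa using (TSym.sym.inj hcon)
                    refine iff_of_false (not_reaches_of_stuck (by rw [hd, stA]; simp) ?_)
                      (by rintro ⟨_, hb, hc, _⟩; omega)
                    rw [hd, stA, List.cons_append]
                    simp [DPPDA.step, M, tr_s5_aa_none hs4]
            · -- q' < p' : too few b's, stuck on top aa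
              obtain ⟨d, hd⟩ : ∃ d, p' - q' = d + 1 := ⟨p' - q' - 1, by omega⟩
              have hs2 : tapeNth w (p' + 3 + q') ≠ .sym 1 := by
                have hidx : p' + 3 + q' = (p' + 1) + (q' + 1) + 1 := by omega
                cases r with
                | succ r' =>
                    have h' := F3 0 (by omega)
                    rw [show p' + 1 + (q' + 1) + 0 + 1 = p' + 3 + q' by omega] at h'
                    rw [h']; intro hcon; exact absurd (TSym.sym.inj hcon) (by decide)
                | zero =>
                    cases t with
                    | nil =>
                        have h' := tape_end (show w[(p' + 1) + (q' + 1) + 0 + 0]? = none by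
                          rw [hgetT 0]; rfl)
                        rw [show p' + 1 + (q' + 1) + 0 + 0 + 1 = p' + 3 + q' by omega] at h'
                        rw [h']; intro hcon; cases hcon
                    | cons x t' =>
                        have h' := tape_get (show w[(p' + 1) + (q' + 1) + 0 + 0]? = some x by
                          rw [hgetT 0]; simp)
                        rw [show p' + 1 + (q' + 1) + 0 + 0 + 1 = p' + 3 + q' by omega] at h'
                        rw [h']
                        intro hcon
                        apply h2
                        rw [hu2]
                        simpa using (TSym.sym.inj hcon)
              refine iff_of_false (not_reaches_of_stuck (by rw [hd, stA]; simp) ?_)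
                (by rintro ⟨_, hb, _⟩; omega)
              rw [hd, stA, List.cons_append]
              simp [DPPDA.step, M, tr_s2_aa_none hs2]
          · -- more b's than a's : pop all p' then stuck on pp
            rw [show stA 1 p' = stA 1 p' ++ [] from (List.append_nil _).symm, List.append_assoc,
              loopPop (show tr .s2 (.sym (1 : Fin 3)) .aa = some (.s2, [], Dir.right) from rfl)
                p' (p' + 3) _ _ (fun i hi => by
                  have h' := F2 (i + 1) (by omega)
                  rwa [show p' + 1 + (i + 1) + 1 = p' + 3 + i by omega] at h')]
            have hs2 : tapeNth w (p' + 3 + p') = .sym 1 := by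
              have h' := F2 (p' + 1) (by omega)
              rwa [show p' + 1 + (p' + 1) + 1 = p' + 3 + p' by omega] at h'
            refine iff_of_false (not_reaches_of_stuck (by simp) ?_)
              (by rintro ⟨_, hb, _⟩; omega)
            simp [DPPDA.step, M, hs2, show tr .s2 (.sym (1 : Fin 3)) .pp = none from rfl]

end ABC
namespace ABC

lemma decomp (s : Fin 3) (w : List (Fin 3)) :
    ∃ p v, w = List.replicate p s ++ v ∧ v.head? ≠ some s := by
  induction w with
  | nil => exact ⟨0, [], by simp, by simp⟩
  | cons x xs ih =>
      by_cases hx : x = s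
      · obtain ⟨p, v, h, hv⟩ := ih
        exact ⟨p + 1, v, by simp [hx, h, List.replicate_succ], hv⟩
      · exact ⟨0, x :: xs, by simp, by simpa using hx⟩

end ABC


/-- There is a one-way deterministic pointer pushdown automaton
over a three-letter alphabet `{a, b, c}` (encoded as `Fin 3`, with `a = 0`,
`b = 1`, `c = 2`) recognizing exactly `{aⁿbⁿcⁿ | n ≥ 1}`. -/
theorem dppda_anbncn :
    ∃ (Q Γ : Type) (_ : Finite Q) (_ : Finite Γ) (M : DPPDA Q (Fin 3) Γ),
      M.OneWay ∧
      ∀ w : List (Fin 3), M.Accepts w ↔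
        ∃ n : ℕ, 1 ≤ n ∧
          w = List.replicate n (0 : Fin 3) ++ List.replicate n (1 : Fin 3) ++
              List.replicate n (2 : Fin 3) := by
  refine ⟨ABC.St, ABC.Sk, Finite.of_fintype _, Finite.of_fintype _, ABC.M, ABC.oneWay, ?_⟩
  intro w
  constructor
  · intro hacc
    obtain ⟨p, u, hw, hu⟩ := ABC.decomp 0 w
    obtain ⟨q, v, huv, hv⟩ := ABC.decomp 1 u
    obtain ⟨r, t, hvt, ht⟩ := ABC.decomp 2 v
    subst hvt; subst huv; subst hw
    rw [ABC.master p q r t hu hv ht] at hacc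
    obtain ⟨hp, hpq, hqr, ht0⟩ := hacc
    subst hpq; subst hqr; subst ht0
    exact ⟨p, hp, by simp [List.append_assoc]⟩
  · rintro ⟨n, hn, hwn⟩
    subst hwn
    obtain ⟨m, rfl⟩ : ∃ m, n = m + 1 := ⟨n - 1, by omega⟩
    have h1 : (List.replicate (m + 1) (1 : Fin 3) ++
        (List.replicate (m + 1) (2 : Fin 3) ++ ([] : List (Fin 3)))).head? ≠ some 0 := by
      simp [List.replicate_succ]
    have h2 : (List.replicate (m + 1) (2 : Fin 3) ++ ([] : List (Fin 3))).head? ≠ some 1 := by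
      simp [List.replicate_succ]
    have h3 : ([] : List (Fin 3)).head? ≠ some 2 := by simp
    have := (ABC.master (m + 1) (m + 1) (m + 1) [] h1 h2 h3).mpr ⟨by omega, rfl, rfl, rfl⟩
    simpa [List.append_assoc] using this
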